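/- For natural numbers N and k with k ≤ N, let G ∈ ℤ[q] be the polynomial G(q) = Σ_{v} p_k(v, N−k)·q^v (the Gaussian binomial coefficient [N choose k]_q expressed as the generating polynomial of partitions into at most k parts each at most N−k). Then the formal derivative of G evaluated at q = 1 satisfies 2·G′(1) = C(N,k) · k · (N−k). (Combined with G(1) = C(N,k), this yields, by logarithmic differentiation of q^{k(k+1)/2}·[N choose k]_q at q = 1, the expected value E(W) = k(N+1)/2 of the rank-sum statistic.) -/

import Mathlib

/-- `pCount ℓ m w` is the number of partitions of `w` into at most `ℓ` parts,
with every part in `{1, 2, …, m}`. -/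
def pCount (ℓ m w : ℕ) : ℕ :=
  (Finset.univ.filter
    (fun P : Nat.Partition w => P.parts.card ≤ ℓ ∧ ∀ x ∈ P.parts, x ≤ m)).card

/-- multiset version: multisets of size `k` with entries in `{0,…,m}` and sum `w`. -/
def mCount (k m w : ℕ) : ℕ :=
  (((Finset.range (m + 1)).sym k).filter (fun μ => (Sym.toMultiset μ).sum = w)).card

lemma pCount_eq_mCount (k m w : ℕ) : pCount k m w = mCount k m w := by
  classical
  refine Finset.card_bij'
    (fun P hP => (⟨P.parts + Multiset.replicate (k - P.parts.card) 0, ?_⟩ : Sym ℕ k))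
    (fun μ hμ => Nat.Partition.ofSums w μ.toMultiset ?_) ?_ ?_ ?_ ?_
  · have hP' := (Finset.mem_filter.mp hP).2
    simp [Nat.add_sub_cancel' hP'.1]
  · exact (Finset.mem_filter.mp hμ).2
  · intro P hP
    simp only [Finset.mem_filter, Finset.mem_univ, true_and] at hP ⊢
    refine Finset.mem_filter.mpr ⟨?_, ?_⟩
    · refine Finset.mem_sym_iff.mpr ?_
      intro a ha
      simp only [Sym.mem_mk, Multiset.mem_add] at ha
      rcases ha with ha | ha
      · exact Finset.mem_range.mpr (Nat.lt_succ_of_le (hP.2 a ha))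
      · rw [Multiset.eq_of_mem_replicate ha]; simp
    · simp [P.parts_sum]
  · intro μ hμ
    simp only [Finset.mem_filter, Finset.mem_univ, true_and]
    constructor
    · calc (μ.toMultiset.filter (· ≠ 0)).card ≤ μ.toMultiset.card :=
            Multiset.card_le_card (Multiset.filter_le _ _)
        _ = k := μ.2
    · intro x hx
      have hx' : x ∈ μ.toMultiset := Multiset.mem_of_mem_filter hx
      have := Finset.mem_sym_iff.mp (Finset.mem_filter.mp hμ).1 x hx'
      exact Nat.lt_succ_iff.mp (Finset.mem_range.mp this)
  · intro P hP
    ext1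
    simp only [Nat.Partition.ofSums_parts, Sym.toMultiset, Multiset.filter_add]
    rw [Multiset.filter_eq_self.mpr (fun a ha => (P.parts_pos ha).ne'),
      Multiset.filter_eq_nil.mpr, add_zero]
    intro a ha
    simp [Multiset.eq_of_mem_replicate ha]
  · intro μ hμ
    apply Subtype.ext
    show (Nat.Partition.ofSums w μ.toMultiset _).parts
        + Multiset.replicate (k - Multiset.card (Nat.Partition.ofSums w μ.toMultiset _).parts) 0
        = μ.toMultiset
    simp only [Nat.Partition.ofSums_parts]
    have h0 : Multiset.filter (fun x => ¬ x ≠ 0) μ.toMultiset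
        = Multiset.replicate (Multiset.count 0 μ.toMultiset) 0 := by
      simp only [ne_eq, not_not]
      exact Multiset.filter_eq' μ.toMultiset 0
    have hcard : k - Multiset.card (Multiset.filter (fun x => x ≠ 0) μ.toMultiset)
        = Multiset.count 0 μ.toMultiset := by
      have := Multiset.filter_add_not (fun x => x ≠ 0) μ.toMultiset
      have hc := congrArg Multiset.card this
      rw [Multiset.card_add, h0, Multiset.card_replicate] at hc
      have h2 : Multiset.card μ.toMultiset = k := μ.2
      omega
    rw [hcard, ← h0]
    exact Multiset.filter_add_not _ _

lemma sum_map_compl {k m : ℕ} (μ : Sym ℕ k) (h : ∀ x ∈ μ.toMultiset, x ≤ m) :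
    (Multiset.map (fun x => m - x) μ.toMultiset).sum + μ.toMultiset.sum = k * m := by
  have h1 : (Multiset.map (fun x => m - x + x) μ.toMultiset).sum
      = (Multiset.map (fun x => m - x) μ.toMultiset).sum
        + (Multiset.map (fun x => x) μ.toMultiset).sum := Multiset.sum_map_add
  rw [Multiset.map_id'] at h1
  have h2 : Multiset.map (fun x => m - x + x) μ.toMultiset
      = Multiset.map (fun _ => m) μ.toMultiset :=
    Multiset.map_congr rfl (fun x hx => Nat.sub_add_cancel (h x hx))
  rw [← h1, h2, Multiset.map_const', Multiset.sum_replicate]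
  have hc : Multiset.card μ.toMultiset = k := μ.2
  rw [hc, smul_eq_mul]

lemma mem_le {k m : ℕ} {μ : Sym ℕ k} (hμ : μ ∈ (Finset.range (m + 1)).sym k) :
    ∀ x ∈ μ.toMultiset, x ≤ m := fun x hx =>
  Nat.lt_succ_iff.mp (Finset.mem_range.mp (Finset.mem_sym_iff.mp hμ x hx))

lemma mCount_symm (k m w : ℕ) (hw : w ≤ k * m) :
    mCount k m w = mCount k m (k * m - w) := by
  classical
  refine Finset.card_bij' (fun μ _ => μ.map (fun x => m - x))
    (fun μ _ => μ.map (fun x => m - x)) ?_ ?_ ?_ ?_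
  · intro μ hμ
    have h := Finset.mem_filter.mp hμ
    have hle := mem_le h.1
    rw [Finset.mem_filter]
    constructor
    · rw [Finset.mem_sym_iff]
      intro a ha
      rw [Sym.mem_map] at ha
      obtain ⟨b, _, rfl⟩ := ha
      exact Finset.mem_range.mpr (Nat.lt_succ_of_le (Nat.sub_le _ _))
    · have := sum_map_compl μ hle
      show (Multiset.map (fun x => m - x) μ.toMultiset).sum = k * m - w
      have h2 := h.2
      omega
  · intro μ hμ
    have h := Finset.mem_filter.mp hμ
    have hle := mem_le h.1
    rw [Finset.mem_filter]
    constructor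
    · rw [Finset.mem_sym_iff]
      intro a ha
      rw [Sym.mem_map] at ha
      obtain ⟨b, _, rfl⟩ := ha
      exact Finset.mem_range.mpr (Nat.lt_succ_of_le (Nat.sub_le _ _))
    · have := sum_map_compl μ hle
      show (Multiset.map (fun x => m - x) μ.toMultiset).sum = w
      have h2 := h.2
      omega
  · intro μ hμ
    have hle := mem_le (Finset.mem_filter.mp hμ).1
    apply Subtype.ext
    show Multiset.map (fun x => m - x) (Multiset.map (fun x => m - x) μ.toMultiset)
        = μ.toMultiset
    rw [Multiset.map_map]
    calc Multiset.map ((fun x => m - x) ∘ fun x => m - x) μ.toMultiset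
        = Multiset.map id μ.toMultiset :=
          Multiset.map_congr rfl (fun x hx => by
            simp only [Function.comp_apply, id]
            have := hle x hx; omega)
      _ = μ.toMultiset := Multiset.map_id _
  · intro μ hμ
    have hle := mem_le (Finset.mem_filter.mp hμ).1
    apply Subtype.ext
    show Multiset.map (fun x => m - x) (Multiset.map (fun x => m - x) μ.toMultiset)
        = μ.toMultiset
    rw [Multiset.map_map]
    calc Multiset.map ((fun x => m - x) ∘ fun x => m - x) μ.toMultiset
        = Multiset.map id μ.toMultiset :=
          Multiset.map_congr rfl (fun x hx => by
            simp only [Function.comp_apply, id]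
            have := hle x hx; omega)
      _ = μ.toMultiset := Multiset.map_id _

lemma card_sym_range (k m : ℕ) :
    ((Finset.range (m + 1)).sym k).card = (m + k).choose k := by
  classical
  have hcard : ((Finset.range (m + 1)).sym k).card
      = (Finset.univ : Finset (Sym (Fin (m + 1)) k)).card := by
    refine Finset.card_bij'
      (fun μ _ => μ.map (fun x => (⟨min x m, Nat.lt_succ_of_le (Nat.min_le_right x m)⟩ :
        Fin (m + 1))))
      (fun ν _ => ν.map Fin.val) (fun _ _ => Finset.mem_univ _) ?_ ?_ ?_
    · intro ν _
      rw [Finset.mem_sym_iff]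
      intro a ha
      rw [Sym.mem_map] at ha
      obtain ⟨b, _, rfl⟩ := ha
      exact Finset.mem_range.mpr b.isLt
    · intro μ hμ
      have hle := mem_le hμ
      apply Subtype.ext
      show Multiset.map _ (Multiset.map _ μ.toMultiset) = μ.toMultiset
      rw [Multiset.map_map]
      calc Multiset.map _ μ.toMultiset = Multiset.map id μ.toMultiset :=
            Multiset.map_congr rfl (fun x hx => by
              simp only [Function.comp_apply, id]
              exact min_eq_left (hle x hx))
        _ = μ.toMultiset := Multiset.map_id _
    · intro ν _
      apply Subtype.ext
      show Multiset.map _ (Multiset.map _ ν.toMultiset) = ν.toMultiset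
      rw [Multiset.map_map]
      calc Multiset.map _ ν.toMultiset = Multiset.map id ν.toMultiset :=
            Multiset.map_congr rfl (fun x _ => by
              simp only [Function.comp_apply, id]
              apply Fin.ext
              simp [min_eq_left (Nat.lt_succ_iff.mp x.isLt)])
        _ = ν.toMultiset := Multiset.map_id _
  rw [hcard, Finset.card_univ, Sym.card_sym_eq_choose, Fintype.card_fin]
  congr 1
  omega

lemma mCount_total (k m : ℕ) :
    ∑ w ∈ Finset.range (k * m + 1), mCount k m w = (m + k).choose k := by
  classical
  have h1 : ((Finset.range (m + 1)).sym k).card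
      = ∑ w ∈ Finset.range (k * m + 1), mCount k m w := by
    unfold mCount
    apply Finset.card_eq_sum_card_fiberwise
      (f := fun μ : Sym ℕ k => (Sym.toMultiset μ).sum)
    intro μ hμ
    have hle := mem_le hμ
    simp only [Finset.mem_coe, Finset.mem_range, Nat.lt_add_one_iff]
    calc μ.toMultiset.sum ≤ Multiset.card μ.toMultiset • m :=
          Multiset.sum_le_card_nsmul μ.toMultiset m hle
      _ = k * m := by
          have hc : Multiset.card μ.toMultiset = k := μ.2
          rw [hc, smul_eq_mul]
  rw [← h1, card_sym_range]

lemma key_sum (k m : ℕ) :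
    2 * ∑ v ∈ Finset.range (k * m + 1), v * pCount k m v
      = (m + k).choose k * (k * m) := by
  have hsym : ∀ v ∈ Finset.range (k * m + 1), pCount k m (k * m - v) = pCount k m v := by
    intro v hv
    have hv' : v ≤ k * m := Nat.lt_succ_iff.mp (Finset.mem_range.mp hv)
    rw [pCount_eq_mCount, pCount_eq_mCount, ← mCount_symm k m v hv']
  have h1 : ∑ v ∈ Finset.range (k * m + 1), v * pCount k m v
      = ∑ v ∈ Finset.range (k * m + 1), (k * m - v) * pCount k m v := by
    rw [← Finset.sum_range_reflect (fun v => v * pCount k m v) (k * m + 1)]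
    apply Finset.sum_congr rfl
    intro j hj
    have hjj : k * m + 1 - 1 - j = k * m - j := by omega
    rw [hjj, hsym j hj]
  calc 2 * ∑ v ∈ Finset.range (k * m + 1), v * pCount k m v
      = (∑ v ∈ Finset.range (k * m + 1), v * pCount k m v)
        + ∑ v ∈ Finset.range (k * m + 1), (k * m - v) * pCount k m v := by
        rw [← h1]; ring
    _ = ∑ v ∈ Finset.range (k * m + 1), (k * m) * pCount k m v := by
        rw [← Finset.sum_add_distrib]
        apply Finset.sum_congr rfl
        intro v hv
        have := Finset.mem_range.mp hv
        rw [← Nat.add_mul]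
        congr 1
        omega
    _ = (k * m) * ∑ v ∈ Finset.range (k * m + 1), pCount k m v := by
        rw [Finset.mul_sum]
    _ = (k * m) * (m + k).choose k := by
        congr 1
        calc ∑ v ∈ Finset.range (k * m + 1), pCount k m v
            = ∑ v ∈ Finset.range (k * m + 1), mCount k m v :=
              Finset.sum_congr rfl (fun v _ => pCount_eq_mCount k m v)
          _ = (m + k).choose k := mCount_total k m
    _ = (m + k).choose k * (k * m) := Nat.mul_comm _ _

theorem gaussian_binomial_derivative_at_one (N k : ℕ) (hkN : k ≤ N) :
    2 * (Polynomial.derivative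
        (∑ v ∈ Finset.range (k * (N - k) + 1),
          Polynomial.C (pCount k (N - k) v : ℤ) * Polynomial.X ^ v)).eval 1 =
      (N.choose k : ℤ) * (k : ℤ) * ((N : ℤ) - (k : ℤ)) := by
  set m := N - k with hm
  have heval : (Polynomial.derivative
        (∑ v ∈ Finset.range (k * m + 1),
          Polynomial.C (pCount k m v : ℤ) * Polynomial.X ^ v)).eval 1
      = ∑ v ∈ Finset.range (k * m + 1), (v : ℤ) * (pCount k m v : ℤ) := by
    rw [map_sum, Polynomial.eval_finset_sum]
    apply Finset.sum_congr rfl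
    intro v _
    rw [Polynomial.derivative_C_mul_X_pow]
    simp [mul_comm]
  rw [heval]
  have hkey := key_sum k m
  have hz : (2 * ∑ v ∈ Finset.range (k * m + 1), v * pCount k m v : ℤ)
      = ((m + k).choose k * (k * m) : ℕ) := by exact_mod_cast congrArg (Nat.cast : ℕ → ℤ) hkey
  push_cast at hz
  have hmk : m + k = N := by omega
  have hNk : ((N : ℤ) - (k : ℤ)) = (m : ℤ) := by
    have : k + m = N := by omega
    push_cast [← this]
    ring
  rw [hNk]
  rw [hmk] at hz
  exact hz.trans (by ring)
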